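/- (Lemma 1) Let N, n, k be natural numbers with 1 ≤ k ≤ n ≤ N, and define the piecewise function Pr'(R) for 0 ≤ R ≤ N by: Pr'(R) = 0 if R < k; Pr'(R) = Σ_{x=k}^{min(R,n)} C(R, x)·C(N − R, n − x) / C(N, n) if k ≤ R < N − (n − k); and Pr'(R) = 1 if R ≥ N − (n − k). Then Pr' is a non-decreasing function of R on {0, 1, …, N}. -/

import Mathlib

open Finset

lemma aux_split (N n k R : ℕ) (hkn : k ≤ n) (hRN : R ≤ N) :
    (∑ x ∈ range k, (R.choose x * (N - R).choose (n - x) : ℚ)) +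
      ∑ x ∈ Icc k n, (R.choose x * (N - R).choose (n - x) : ℚ) = N.choose n := by
  have hv : (N.choose n : ℚ) = ∑ x ∈ range (n+1), (R.choose x * (N - R).choose (n - x) : ℚ) := by
    have h := Nat.add_choose_eq R (N - R) n
    rw [Nat.add_sub_cancel' hRN] at h
    rw [h, Finset.Nat.sum_antidiagonal_eq_sum_range_succ_mk]
    push_cast
    rfl
  rw [hv, range_eq_Ico, ← Finset.Ico_add_one_right_eq_Icc, range_eq_Ico,
    ← Finset.sum_Ico_consecutive _ (Nat.zero_le k) (by omega : k ≤ n + 1)]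

lemma aux_cap (N n k R : ℕ) :
    (∑ x ∈ Icc k (min R n), (R.choose x * (N - R).choose (n - x) : ℚ)) =
      ∑ x ∈ Icc k n, (R.choose x * (N - R).choose (n - x) : ℚ) := by
  apply Finset.sum_subset
  · exact Icc_subset_Icc_right (min_le_right _ _)
  · intro x hx hx'
    simp only [mem_Icc] at hx hx'
    have : R < x := by omega
    simp [Nat.choose_eq_zero_of_lt this]

lemma aux_step (N n k R : ℕ) (hk : 1 ≤ k) (hkn : k ≤ n) (hRN : R < N) :
    (∑ x ∈ range k, ((R+1).choose x * (N - (R+1)).choose (n - x) : ℚ)) +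
      (R.choose (k-1) * (N - (R+1)).choose (n - k) : ℚ) =
      ∑ x ∈ range k, (R.choose x * (N - R).choose (n - x) : ℚ) := by
  obtain ⟨m, rfl⟩ : ∃ m, k = m + 1 := ⟨k - 1, by omega⟩
  have hNR : N - R = (N - (R+1)) + 1 := by omega
  have hrhs : ∑ x ∈ range (m+1), (R.choose x * (N - R).choose (n - x) : ℚ)
      = (∑ x ∈ range (m+1), (R.choose x * (N - (R+1)).choose (n - x) : ℚ))
        + ∑ x ∈ range (m+1), (R.choose x * (N - (R+1)).choose (n - x - 1) : ℚ) := by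
    rw [← Finset.sum_add_distrib]
    apply Finset.sum_congr rfl
    intro x hx
    simp only [mem_range] at hx
    have hxn : n - x = (n - x - 1) + 1 := by omega
    rw [hNR, hxn, Nat.choose_succ_succ]
    push_cast
    ring
  rw [hrhs]
  have hlhs : ∑ x ∈ range (m+1), ((R+1).choose x * (N - (R+1)).choose (n - x) : ℚ)
      = (∑ y ∈ range m, (R.choose y * (N - (R+1)).choose (n - y - 1) : ℚ))
        + ((∑ y ∈ range m, (R.choose (y+1) * (N - (R+1)).choose (n - y - 1) : ℚ))
           + ((N - (R+1)).choose n : ℚ)) := by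
    rw [Finset.sum_range_succ']
    have hterm : ∀ x ∈ range m, (((R+1).choose (x+1)) * ((N-(R+1)).choose (n-(x+1))) : ℚ)
        = R.choose x * (N-(R+1)).choose (n-x-1) + R.choose (x+1) * (N-(R+1)).choose (n-x-1) := by
      intro x _
      rw [Nat.choose_succ_succ]
      have h : n - (x+1) = n - x - 1 := by omega
      rw [h]
      push_cast
      ring
    rw [Finset.sum_congr rfl hterm, Finset.sum_add_distrib]
    norm_num
    ring
  rw [hlhs]
  have h1 : ∑ x ∈ range (m+1), (R.choose x * (N - (R+1)).choose (n - x) : ℚ)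
      = (∑ y ∈ range m, (R.choose (y+1) * (N - (R+1)).choose (n - y - 1) : ℚ))
        + ((N - (R+1)).choose n : ℚ) := by
    rw [Finset.sum_range_succ']
    simp [Nat.sub_sub]
  have h2 : ∑ x ∈ range (m+1), (R.choose x * (N - (R+1)).choose (n - x - 1) : ℚ)
      = (∑ y ∈ range m, (R.choose y * (N - (R+1)).choose (n - y - 1) : ℚ))
        + (R.choose m * (N - (R+1)).choose (n - (m+1)) : ℚ) := by
    rw [Finset.sum_range_succ]
    simp [Nat.sub_sub]
  rw [h1, h2]
  simp only [Nat.add_sub_cancel]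
  ring

/-- Lemma 1: the piecewise SP-FEC layer recovery probability `Pr'` is a
non-decreasing function of the number of received symbols `R` on `{0, 1, …, N}`. -/
theorem sp_fec_recovery_monotone (N n k : ℕ)
    (hk : 1 ≤ k) (hkn : k ≤ n) (hnN : n ≤ N)
    (Pr' : ℕ → ℚ)
    (hPr : ∀ R, Pr' R =
      if R < k then 0
      else if R < N - (n - k) then
        ∑ x ∈ Finset.Icc k (min R n),
          (R.choose x * (N - R).choose (n - x) : ℚ) / N.choose n
      else 1) :
    ∀ R S : ℕ, R ≤ S → S ≤ N → Pr' R ≤ Pr' S := by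
  have hCpos : (0:ℚ) < N.choose n := by exact_mod_cast Nat.choose_pos hnN
  have hsum : ∀ R : ℕ, (∑ x ∈ Finset.Icc k (min R n),
        (R.choose x * (N - R).choose (n - x) : ℚ) / N.choose n)
      = (∑ x ∈ Finset.Icc k n, (R.choose x * (N - R).choose (n - x) : ℚ)) / N.choose n := by
    intro R
    rw [← Finset.sum_div, aux_cap]
  have hT0 : ∀ R : ℕ, 0 ≤ ∑ x ∈ Finset.range k, (R.choose x * (N - R).choose (n - x) : ℚ) :=
    fun R => Finset.sum_nonneg fun x _ => by positivity
  have hS0 : ∀ R : ℕ, 0 ≤ ∑ x ∈ Finset.Icc k n, (R.choose x * (N - R).choose (n - x) : ℚ) :=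
    fun R => Finset.sum_nonneg fun x _ => by positivity
  have hle1 : ∀ R : ℕ, R ≤ N → (∑ x ∈ Finset.Icc k (min R n),
        (R.choose x * (N - R).choose (n - x) : ℚ) / N.choose n) ≤ 1 := by
    intro R hR
    rw [hsum, div_le_one hCpos]
    have h := aux_split N n k R hkn hR
    linarith [hT0 R]
  have hnn : ∀ R : ℕ, 0 ≤ Pr' R := by
    intro R
    rw [hPr R]
    split_ifs
    · exact le_refl 0
    · rw [hsum]
      exact div_nonneg (hS0 R) hCpos.le
    · exact zero_le_one
  have step : ∀ R : ℕ, R < N → Pr' R ≤ Pr' (R+1) := by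
    intro R hR
    by_cases h1 : R < k
    · rw [hPr R, if_pos h1]
      exact hnn (R+1)
    · rw [hPr R, if_neg h1, hPr (R+1), if_neg (by omega : ¬ R + 1 < k)]
      by_cases h2 : R < N - (n - k)
      · rw [if_pos h2]
        by_cases h3 : R + 1 < N - (n - k)
        · rw [if_pos h3, hsum, hsum]
          have hA1 := aux_split N n k R hkn (by omega)
          have hA2 := aux_split N n k (R+1) hkn (by omega)
          have hS := aux_step N n k R hk hkn hR
          have hx : (0:ℚ) ≤ (R.choose (k-1) * (N - (R+1)).choose (n - k) : ℚ) := by positivity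
          exact (div_le_div_iff_of_pos_right hCpos).mpr (by linarith)
        · rw [if_neg h3]
          exact hle1 R (by omega)
      · rw [if_neg h2, if_neg (by omega : ¬ R + 1 < N - (n - k))]
  intro R S
  induction S with
  | zero =>
    intro h1 _
    have : R = 0 := Nat.le_zero.mp h1
    subst this
    exact le_refl _
  | succ S ih =>
    intro h1 h2
    rcases Nat.lt_or_ge R (S+1) with h | h
    · exact le_trans (ih (by omega) (by omega)) (step S (by omega))
    · have : R = S + 1 := by omega
      subst this
      exact le_refl _
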